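/- Let Δ be a pure, collapsible d-dimensional simplicial complex with f_d facets and f_{d−1} ridges, and let K be a field. Then the f_d × f_{d−1} zero-one matrix M over K, with rows indexed by the facets of Δ and columns by the ridges of Δ, whose (F, σ) entry is 1 if σ ⊆ F and 0 otherwise (the log matrix of the facet ideal of the incidence complex Δ(d)), has rank f_d. In particular f_d ≤ f_{d−1}, and the facet ideal of Δ(d) has maximal analytic spread ℓ(F(Δ(d))) = f_d. -/
import Mathlib

open MvPolynomial
open scoped Classical

/-- `Δ` is a simplicial complex on vertex set `Fin n`: it contains the empty
face and is closed under taking subsets. -/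
def IsComplex {n : ℕ} (Δ : Finset (Finset (Fin n))) : Prop :=
  ∅ ∈ Δ ∧ ∀ σ ∈ Δ, ∀ τ, τ ⊆ σ → τ ∈ Δ

/-- `Δ` has dimension `d`: every face has at most `d + 1` vertices and some
face has exactly `d + 1` vertices. -/
def HasDim {n : ℕ} (Δ : Finset (Finset (Fin n))) (d : ℕ) : Prop :=
  (∀ σ ∈ Δ, σ.card ≤ d + 1) ∧ ∃ σ ∈ Δ, σ.card = d + 1

/-- `f_{k-1}(Δ)`: the number of faces of `Δ` with exactly `k` vertices. -/
noncomputable def faceCount {n : ℕ} (Δ : Finset (Finset (Fin n))) (k : ℕ) : ℕ :=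
  (Δ.filter fun σ => σ.card = k).card

/-- The h-polynomial of a `d`-dimensional complex `Δ`, defined by
`∑_{i=0}^{d+1} f_{i-1}(Δ) (x-1)^{d+1-i} = ∑_{i=0}^{d+1} h_i x^{d+1-i}`;
obtained by reflecting the left-hand side in the window `[0, d+1]`. -/
noncomputable def hPoly {n : ℕ} (Δ : Finset (Finset (Fin n))) (d : ℕ) : Polynomial ℤ :=
  Polynomial.reflect (d + 1)
    (∑ i ∈ Finset.range (d + 2), (faceCount Δ i : ℤ) • (Polynomial.X - 1) ^ (d + 1 - i))

/-- The Stanley–Reisner ideal of `Δ` in `K[x_1, …, x_n]`. -/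
noncomputable def SRIdeal (K : Type) [Field K] {n : ℕ} (Δ : Finset (Finset (Fin n))) :
    Ideal (MvPolynomial (Fin n) K) :=
  Ideal.span {m | ∃ σ : Finset (Fin n), σ ∉ Δ ∧ m = ∏ i ∈ σ, X i}

/-- The ideal `(x_1^{a_1}, …, x_n^{a_n})`. -/
noncomputable def powersIdeal (K : Type) [Field K] (n : ℕ) (a : Fin n → ℕ) :
    Ideal (MvPolynomial (Fin n) K) :=
  Ideal.span (Set.range fun i : Fin n => (X i : MvPolynomial (Fin n) K) ^ a i)

/-- `F` is a facet (maximal face) of `Δ`. -/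
def IsFacet {n : ℕ} (Δ : Finset (Finset (Fin n))) (F : Finset (Fin n)) : Prop :=
  F ∈ Δ ∧ ∀ G ∈ Δ, F ⊆ G → F = G

/-- `Δ` is pure of dimension `d`: every facet has `d + 1` vertices. -/
def IsPure {n : ℕ} (Δ : Finset (Finset (Fin n))) (d : ℕ) : Prop :=
  ∀ F : Finset (Fin n), IsFacet Δ F → F.card = d + 1

/-- The finset of facets of `Δ`. -/
noncomputable def facetsF {n : ℕ} (Δ : Finset (Finset (Fin n))) : Finset (Finset (Fin n)) :=
  Δ.filter fun F => ∀ G ∈ Δ, F ⊆ G → F = G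

/-- The finset of ridges of a pure `d`-dimensional `Δ`: faces with `d` vertices. -/
noncomputable def ridgesF {n : ℕ} (Δ : Finset (Finset (Fin n))) (d : ℕ) :
    Finset (Finset (Fin n)) :=
  Δ.filter fun σ => σ.card = d

/-- The degree-`s` homogeneous component of `R/J`, as the image in the quotient
of the space of homogeneous polynomials of degree `s`. -/
noncomputable def quotComponent (K : Type) [Field K] {n : ℕ}
    (J : Ideal (MvPolynomial (Fin n) K)) (s : ℕ) :
    Submodule K (MvPolynomial (Fin n) K ⧸ J) :=
  (MvPolynomial.homogeneousSubmodule (Fin n) K s).map (Ideal.Quotient.mkₐ K J).toLinearMap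

/-- `dim_K (R/J)_s`. -/
noncomputable def quotDim (K : Type) [Field K] {n : ℕ}
    (J : Ideal (MvPolynomial (Fin n) K)) (s : ℕ) : ℕ :=
  Module.finrank K (quotComponent K J s)
/-- One elementary collapse: remove a free face `σ` (a face properly contained
in exactly one face `τ`) together with `τ`. -/
def CollapseStep {n : ℕ} (Δ Δ' : Finset (Finset (Fin n))) : Prop :=
  ∃ σ τ : Finset (Fin n), σ ∈ Δ ∧ τ ∈ Δ ∧ σ ⊂ τ ∧
    (∀ η ∈ Δ, σ ⊂ η → η = τ) ∧ Δ' = Δ \ {σ, τ}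

/-- `Δ` is collapsible: some sequence of elementary collapses reduces `Δ` to a
complex consisting of a single vertex. -/
def Collapsible {n : ℕ} (Δ : Finset (Finset (Fin n))) : Prop :=
  ∃ v : Fin n, Relation.ReflTransGen CollapseStep Δ {∅, {v}}

/-- Key combinatorial lemma: along a collapsing sequence, every face of
cardinality `d+1` can be assigned a "free ridge" `r F ⊆ F` and a removal
time `t F` such that any other `(d+1)`-face containing `r F` has smaller time. -/
lemma collapse_key {n d : ℕ} (hd : 1 ≤ d) {v : Fin n} {Δ' : Finset (Finset (Fin n))}
    (hchain : Relation.ReflTransGen CollapseStep Δ' {∅, {v}}) :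
    (∀ ρ ∈ Δ', ∀ η ⊆ ρ, η ∈ Δ') → (∀ ρ ∈ Δ', ρ.card ≤ d + 1) →
    ∃ (r : Finset (Fin n) → Finset (Fin n)) (t : Finset (Fin n) → ℕ),
      ∀ F ∈ Δ', F.card = d + 1 →
        r F ∈ Δ' ∧ (r F).card = d ∧ r F ⊆ F ∧
        ∀ G ∈ Δ', G.card = d + 1 → r F ⊆ G → G ≠ F → t G < t F := by
  induction hchain using Relation.ReflTransGen.head_induction_on with
  | refl =>
      intro _ _
      refine ⟨fun _ => ∅, fun _ => 0, ?_⟩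
      intro F hF hcard
      exfalso
      rcases Finset.mem_insert.mp hF with h | h
      · subst h; simp at hcard
      · rw [Finset.mem_singleton] at h; subst h
        rw [Finset.card_singleton] at hcard; omega
  | @head a c hstep hrest ih =>
      intro hdown hbound
      obtain ⟨σ, τ, hσ, hτ, hlt, hfree, rfl⟩ := hstep
      have hστ : σ ⊆ τ := hlt.subset
      have hne : σ ≠ τ := hlt.ne
      -- τ covers σ : card τ = card σ + 1
      have hcov : τ.card = σ.card + 1 := by
        obtain ⟨x, hxτ, hxσ⟩ := Finset.exists_of_ssubset hlt
        have h1 : insert x σ ⊆ τ := Finset.insert_subset hxτ hστ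
        have h2 : insert x σ ∈ a := hdown τ hτ _ h1
        have h3 : σ ⊂ insert x σ := Finset.ssubset_insert hxσ
        have h4 : insert x σ = τ := hfree _ h2 h3
        rw [← h4, Finset.card_insert_of_notMem hxσ]
      -- the smaller complex is downward closed and bounded
      have hmem : ∀ ρ : Finset (Fin n), ρ ∈ a \ {σ, τ} ↔ ρ ∈ a ∧ ρ ≠ σ ∧ ρ ≠ τ := by
        intro ρ
        simp [Finset.mem_sdiff, Finset.mem_insert, Finset.mem_singleton, and_assoc, not_or]
      have hdown' : ∀ ρ ∈ a \ {σ, τ}, ∀ η ⊆ ρ, η ∈ a \ {σ, τ} := by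
        intro ρ hρ η hηρ
        obtain ⟨hρa, hρσ, hρτ⟩ := (hmem ρ).mp hρ
        have hηa : η ∈ a := hdown ρ hρa η hηρ
        refine (hmem η).mpr ⟨hηa, ?_, ?_⟩
        · rintro rfl
          have : η ⊂ ρ := lt_of_le_of_ne hηρ (fun h => hρσ h.symm)
          exact hρτ (hfree ρ hρa this)
        · rintro rfl
          have hσρ : σ ⊂ ρ := lt_of_lt_of_le hlt hηρ
          exact hρτ (hfree ρ hρa hσρ)
      have hbound' : ∀ ρ ∈ a \ {σ, τ}, ρ.card ≤ d + 1 := fun ρ hρ =>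
        hbound ρ ((hmem ρ).mp hρ).1
      obtain ⟨r, t, hrt⟩ := ih hdown' hbound'
      by_cases hτd : τ.card = d + 1
      · -- τ is a facet removed at this step, with free ridge σ
        have hσd : σ.card = d := by omega
        refine ⟨fun F => if F = τ then σ else r F,
                fun F => if F = τ then 0 else t F + 1, ?_⟩
        intro F hF hFcard
        beta_reduce
        by_cases hFτ : F = τ
        · rw [if_pos hFτ, if_pos hFτ]
          refine ⟨hσ, hσd, hFτ ▸ hστ, ?_⟩
          intro G hG hGcard hσG hGF
          exfalso
          have hσG' : σ ⊂ G := lt_of_le_of_ne hσG (by intro h; rw [← h] at hGcard; omega)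
          exact hGF ((hfree G hG hσG').trans hFτ.symm)
        · rw [if_neg hFτ, if_neg hFτ]
          have hFσ : F ≠ σ := by intro h; rw [h] at hFcard; omega
          have hFc : F ∈ a \ {σ, τ} := (hmem F).mpr ⟨hF, hFσ, hFτ⟩
          obtain ⟨h1, h2, h3, h4⟩ := hrt F hFc hFcard
          have h1' := (hmem _).mp h1
          refine ⟨h1'.1, h2, h3, ?_⟩
          intro G hG hGcard hsub hGF
          by_cases hGτ : G = τ
          · rw [if_pos hGτ]; omega
          · rw [if_neg hGτ]
            have hGσ : G ≠ σ := by intro h; rw [h] at hGcard; omega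
            have hGc : G ∈ a \ {σ, τ} := (hmem G).mpr ⟨hG, hGσ, hGτ⟩
            have := h4 G hGc hGcard hsub hGF
            omega
      · -- neither σ nor τ is a facet; nothing changes
        have hτle : τ.card ≤ d := by
          have := hbound τ hτ; omega
        refine ⟨r, t, ?_⟩
        intro F hF hFcard
        have hFτ : F ≠ τ := by intro h; rw [h] at hFcard; omega
        have hFσ : F ≠ σ := by intro h; rw [h] at hFcard; omega
        have hFc : F ∈ a \ {σ, τ} := (hmem F).mpr ⟨hF, hFσ, hFτ⟩
        obtain ⟨h1, h2, h3, h4⟩ := hrt F hFc hFcard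
        refine ⟨((hmem _).mp h1).1, h2, h3, ?_⟩
        intro G hG hGcard hsub hGF
        have hGτ : G ≠ τ := by intro h; rw [h] at hGcard; omega
        have hGσ : G ≠ σ := by intro h; rw [h] at hGcard; omega
        exact h4 G ((hmem G).mpr ⟨hG, hGσ, hGτ⟩) hGcard hsub hGF

/-- **Collapsibility gives maximal analytic spread for `F(Δ(d))`.**
For a pure collapsible `d`-dimensional complex `Δ`, the facet–ridge incidence
matrix (the log matrix of the facet ideal of the incidence complex `Δ(d)`,
with one row for each facet of `Δ` and one column for each ridge) has rank
equal to the number `f_d` of facets; in particular `f_d ≤ f_{d-1}`, and since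
the analytic spread of an equigenerated monomial ideal is the rank of its log
matrix, `ℓ(F(Δ(d))) = f_d` is maximal. -/
theorem collapsible_logMatrix_full_rank (K : Type) [Field K]
    {n d : ℕ} (Δ : Finset (Finset (Fin n)))
    (hcomplex : IsComplex Δ) (hd : 1 ≤ d) (hdim : HasDim Δ d)
    (hpure : IsPure Δ d) (hcol : Collapsible Δ) :
    (Matrix.rank (fun (F : {F // F ∈ facetsF Δ}) (σ : {σ // σ ∈ ridgesF Δ d}) =>
        if σ.1 ⊆ F.1 then (1 : K) else 0) = (facetsF Δ).card) ∧
    (facetsF Δ).card ≤ (ridgesF Δ d).card :=  by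
  have hdown : ∀ ρ ∈ Δ, ∀ η ⊆ ρ, η ∈ Δ := fun ρ h η hs => hcomplex.2 ρ h η hs
  obtain ⟨v, hchain⟩ := hcol
  obtain ⟨r, t, hrt⟩ := collapse_key hd hchain hdown hdim.1
  -- facets of Δ are exactly the faces of cardinality d + 1
  have hfacet_iff : ∀ F, F ∈ facetsF Δ ↔ F ∈ Δ ∧ F.card = d + 1 := by
    intro F
    constructor
    · intro hF
      rw [facetsF, Finset.mem_filter] at hF
      exact ⟨hF.1, hpure F ⟨hF.1, hF.2⟩⟩
    · intro ⟨hF, hcard⟩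
      rw [facetsF, Finset.mem_filter]
      refine ⟨hF, fun G hG hFG => ?_⟩
      exact Finset.eq_of_subset_of_card_le hFG (by rw [hcard]; exact hdim.1 G hG)
  have key : ∀ F ∈ facetsF Δ, r F ∈ ridgesF Δ d ∧ r F ⊆ F ∧
      ∀ G ∈ facetsF Δ, r F ⊆ G → G ≠ F → t G < t F := by
    intro F hF
    obtain ⟨hF1, hF2⟩ := (hfacet_iff F).mp hF
    obtain ⟨h1, h2, h3, h4⟩ := hrt F hF1 hF2
    refine ⟨by rw [ridgesF, Finset.mem_filter]; exact ⟨h1, h2⟩, h3, ?_⟩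
    intro G hG hsub hne
    obtain ⟨hG1, hG2⟩ := (hfacet_iff G).mp hG
    exact h4 G hG1 hG2 hsub hne
  -- the card inequality via the injection F ↦ r F
  have hcards : (facetsF Δ).card ≤ (ridgesF Δ d).card := by
    apply Finset.card_le_card_of_injOn r (fun F hF => (key F hF).1)
    intro F hF G hG hFG
    by_contra hne
    have h1 : t G < t F := (key F hF).2.2 G hG (hFG ▸ (key G hG).2.1) (Ne.symm hne)
    have h2 : t F < t G := (key G hG).2.2 F hF (hFG ▸ (key F hF).2.1) hne
    omega
  refine ⟨?_, hcards⟩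
  -- full rank: the transpose has injective mulVecLin
  set M : Matrix {F // F ∈ facetsF Δ} {σ // σ ∈ ridgesF Δ d} K :=
    Matrix.of (fun F σ => if σ.1 ⊆ F.1 then (1 : K) else 0) with hM
  show M.rank = (facetsF Δ).card
  rw [← Matrix.rank_transpose M]
  have hinj : Function.Injective (Matrix.mulVecLin M.transpose) := by
    rw [← LinearMap.ker_eq_bot, LinearMap.ker_eq_bot']
    intro c hc
    by_contra hc0
    have hS : (Finset.univ.filter fun F : {F // F ∈ facetsF Δ} => c F ≠ 0).Nonempty := by
      rw [Finset.filter_nonempty_iff]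
      push_neg at hc0
      obtain ⟨F, hF⟩ := Function.ne_iff.mp hc0
      exact ⟨F, Finset.mem_univ F, hF⟩
    obtain ⟨F₀, hF₀S, hF₀min⟩ := Finset.exists_min_image _ (fun F => t F.1) hS
    have hF₀ : c F₀ ≠ 0 := (Finset.mem_filter.mp hF₀S).2
    have hσ₀ : r F₀.1 ∈ ridgesF Δ d := (key F₀.1 F₀.2).1
    have hcol : (Matrix.mulVecLin M.transpose) c ⟨r F₀.1, hσ₀⟩ = 0 := by rw [hc]; rfl
    rw [Matrix.mulVecLin_apply] at hcol
    have hsum : M.transpose.mulVec c ⟨r F₀.1, hσ₀⟩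
        = ∑ F : {F // F ∈ facetsF Δ}, M.transpose ⟨r F₀.1, hσ₀⟩ F * c F := rfl
    rw [hsum] at hcol
    have hone : ∑ F : {F // F ∈ facetsF Δ},
        M.transpose ⟨r F₀.1, hσ₀⟩ F * c F = c F₀ := by
      rw [Finset.sum_eq_single F₀]
      · have hss : r F₀.1 ⊆ F₀.1 := (key F₀.1 F₀.2).2.1
        simp [hM, Matrix.transpose_apply, hss]
      · intro G _ hGF₀
        by_cases hcG : c G = 0
        · rw [hcG, mul_zero]
        · by_cases hsub : r F₀.1 ⊆ G.1
          · exfalso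
            have hGne : G.1 ≠ F₀.1 := fun h => hGF₀ (Subtype.ext h)
            have hlt : t G.1 < t F₀.1 := (key F₀.1 F₀.2).2.2 G.1 G.2 hsub hGne
            have hge : t F₀.1 ≤ t G.1 :=
              hF₀min G (Finset.mem_filter.mpr ⟨Finset.mem_univ G, hcG⟩)
            omega
          · simp [hM, Matrix.transpose_apply, hsub]
      · intro h; exact absurd (Finset.mem_univ F₀) h
    rw [hone] at hcol
    exact hF₀ hcol
  rw [Matrix.rank, LinearMap.finrank_range_of_inj hinj,
    Module.finrank_fintype_fun_eq_card, Fintype.card_coe]
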